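/- Let L be a p/q-changemaker lattice with p > q ≥ 2, and let L_F be its fractional part with the vectors v_0, v_1, …, v_m constructed from the set M. Then v_0, v_1, …, v_m form a ℤ-basis of L_F; they satisfy v_i·v_{i+1} = −1 for 0 ≤ i ≤ m−1 and v_i·v_j = 0 whenever |i−j| ≥ 2; and v_i·w_0 = 0, so that v_i ∈ L, for every 1 ≤ i ≤ m. -/

import Mathlib

/-- The negative continued fraction `[b_0, …, b_n]⁻ = b_0 - 1/[b_1, …, b_n]⁻`. -/
def cfMinus : List ℚ → ℚ
  | [] => 0
  | [b] => b
  | b :: c :: rest => b - 1 / cfMinus (c :: rest)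

/-- The standard inner product on `ℤ^ι`. -/
def dot {ι : Type*} [Fintype ι] (x y : ι → ℤ) : ℤ := ∑ i, x i * y i

/-- The basis vector `f_i` (indices shifted: `fvec t s i` is `f_{i+1}`). -/
def fvec (t s : ℕ) (i : Fin t) : Fin t ⊕ Fin (s + 1) → ℤ := Pi.single (Sum.inl i) 1

/-- The basis vector `e_j`, `0 ≤ j ≤ s`. -/
def evec (t s : ℕ) (j : Fin (s + 1)) : Fin t ⊕ Fin (s + 1) → ℤ := Pi.single (Sum.inr j) 1

/-- The changemaker vector `w_0 = e_0 + σ_1 f_1 + ⋯ + σ_t f_t`. -/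
def w0 (t s : ℕ) (σ : Fin t → ℤ) : Fin t ⊕ Fin (s + 1) → ℤ :=
  Sum.elim σ fun j => if (j : ℕ) = 0 then 1 else 0

/-- The vector `w_k = -e_{m_{k-1}} + e_{m_{k-1}+1} + ⋯ + e_{m_k}` for `k ≥ 1`. -/
def wk (t s : ℕ) (m : ℕ → ℕ) (k : ℕ) : Fin t ⊕ Fin (s + 1) → ℤ :=
  Sum.elim 0 fun j =>
    if (j : ℕ) = m (k - 1) then -1
    else if m (k - 1) < (j : ℕ) ∧ (j : ℕ) ≤ m k then 1 else 0

/-- The vectors `w_0, w_1, …, w_l`. -/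
def wvec (t s : ℕ) (σ : Fin t → ℤ) (m : ℕ → ℕ) (k : ℕ) : Fin t ⊕ Fin (s + 1) → ℤ :=
  if k = 0 then w0 t s σ else wk t s m k

/-- The `p/q`-changemaker lattice `L = ⟨w_0, …, w_l⟩^⊥ ⊆ ℤ^{t+s+1}`. -/
def Lset (t s l : ℕ) (σ : Fin t → ℤ) (m : ℕ → ℕ) : Set (Fin t ⊕ Fin (s + 1) → ℤ) :=
  {x | ∀ k ≤ l, dot x (wvec t s σ m k) = 0}

/-- The fractional part `L_F = ⟨w_1, …, w_l⟩^⊥ ∩ ⟨e_0, …, e_s⟩`. -/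
def LFset (t s l : ℕ) (m : ℕ → ℕ) : Set (Fin t ⊕ Fin (s + 1) → ℤ) :=
  {x | (∀ i, x (Sum.inl i) = 0) ∧ ∀ k, 1 ≤ k → k ≤ l → dot x (wk t s m k) = 0}

/-- The index set `M = {0, 1, …, s} ∖ {m_0, m_1, …, m_l}`. -/
def Mset (s l : ℕ) (m : ℕ → ℕ) : Finset ℕ :=
  (Finset.range (s + 1)).filter fun j => ∀ k ≤ l, j ≠ m k

/-- The least element of `M` (equal to `s` if `M = ∅`). -/
def minM (s l : ℕ) (m : ℕ → ℕ) : ℕ :=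
  if h : (Mset s l m).Nonempty then (Mset s l m).min' h else s

/-- For `k ∈ M`, the least element `k'` of `M` greater than `k`; equal to `s`
if no such element exists. -/
def nxt (s l : ℕ) (m : ℕ → ℕ) (k : ℕ) : ℕ :=
  if h : ((Mset s l m).filter fun j => k < j).Nonempty then
    ((Mset s l m).filter fun j => k < j).min' h
  else s

/-- `v_0 = e_0 + e_1 + ⋯ + e_{min M}` (equal to `e_0 + ⋯ + e_s` if `M = ∅`). -/
def v0vec (t s l : ℕ) (m : ℕ → ℕ) : Fin t ⊕ Fin (s + 1) → ℤ :=
  Sum.elim 0 fun j => if (j : ℕ) ≤ minM s l m then 1 else 0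

/-- `v'_k = -e_k + e_{k+1} + ⋯ + e_{k'}` for `k ∈ M`. -/
def vKvec (t s l : ℕ) (m : ℕ → ℕ) (k : ℕ) : Fin t ⊕ Fin (s + 1) → ℤ :=
  Sum.elim 0 fun j =>
    if (j : ℕ) = k then -1
    else if k < (j : ℕ) ∧ (j : ℕ) ≤ nxt s l m k then 1 else 0

/-- The sequence `v_0, v_1, …, v_m` (`m = |M|`): `v_0` as above, and
`v_1, …, v_m` are the vectors `v'_k`, `k ∈ M`, in increasing order of `k`. -/
def vSeq (t s l : ℕ) (m : ℕ → ℕ) (i : ℕ) : Fin t ⊕ Fin (s + 1) → ℤ :=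
  if i = 0 then v0vec t s l m
  else vKvec t s l m (((Mset s l m).sort (· ≤ ·)).getD (i - 1) 0)

/-- `x_F = Σ_{j=0}^s (x·e_j) e_j`, the projection to the span of the `e_j`. -/
def Fpart (t s : ℕ) (x : Fin t ⊕ Fin (s + 1) → ℤ) : Fin t ⊕ Fin (s + 1) → ℤ :=
  ∑ j, dot x (evec t s j) • evec t s j

/-- `z` is irreducible in the lattice `S`: there are no nonzero `x, y ∈ S`
with `z = x + y` and `x·y ≥ 0`. -/
def IrredIn {ι : Type*} [Fintype ι] (S : Set (ι → ℤ)) (z : ι → ℤ) : Prop :=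
  ¬ ∃ x y : ι → ℤ, x ∈ S ∧ y ∈ S ∧ x ≠ 0 ∧ y ≠ 0 ∧ z = x + y ∧ 0 ≤ dot x y

/-- The data `(t, s, l, a, m, σ)` presents the `p/q`-changemaker lattice
`⟨w_0, …, w_l⟩^⊥ ⊆ ℤ^{t+s+1}`, where `p/q = n − r/q = [a_0, a_1, …, a_l]⁻` with
`a_0 = n`, `a_k ≥ 2` for `1 ≤ k ≤ l`; `m_0 = 0`, `m_k = a_1 + ⋯ + a_k − k`,
`s = m_l`; and `(σ_1, …, σ_t)` is a nondecreasing tuple of nonnegative integers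
satisfying the changemaker condition with `w_0·w_0 = 1 + Σ σ_i² = n`. -/
structure IsCMLattice (p q n r : ℤ) (t s l : ℕ) (a : ℕ → ℤ) (m : ℕ → ℕ)
    (σ : Fin t → ℤ) : Prop where
  hq2 : 2 ≤ q
  hqp : q < p
  hgcd : Int.gcd p q = 1
  hp : p = n * q - r
  hr0 : 0 < r
  hrq : r < q
  ha0 : a 0 = n
  hak : ∀ k, 1 ≤ k → k ≤ l → 2 ≤ a k
  hcf : cfMinus ((List.range (l + 1)).map fun i => (a i : ℚ)) = (p : ℚ) / (q : ℚ)
  hm0 : m 0 = 0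
  hmrec : ∀ k, 1 ≤ k → k ≤ l → (m k : ℤ) = (m (k - 1) : ℤ) + a k - 1
  hs : s = m l
  hσ0 : ∀ i, 0 ≤ σ i
  hσmono : Monotone σ
  hσcm : ∀ i : Fin t, σ i ≤ (∑ j ∈ Finset.univ.filter (· < i), σ j) + 1
  hσn : 1 + ∑ i, σ i ^ 2 = n

/-- interval vector at ℕ level -/
def ivN (A B : ℕ) (j : ℕ) : ℤ := if j = A then -1 else if A < j ∧ j ≤ B then 1 else 0

lemma ivN_split (A B j : ℕ) (f : ℕ → ℤ) :
    f j * ivN A B j = (if j = A then -f j else 0) + (if A < j ∧ j ≤ B then f j else 0) := by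
  unfold ivN; split_ifs <;> first | (exfalso; omega) | ring

lemma sum_mul_ivN (f : ℕ → ℤ) (A B N : ℕ) (hA : A < N) (hB : B < N) :
    ∑ j ∈ Finset.range N, f j * ivN A B j = -f A + ∑ j ∈ Finset.Ioc A B, f j := by
  have : ∀ j ∈ Finset.range N, f j * ivN A B j
      = (if j = A then -f j else 0) + (if A < j ∧ j ≤ B then f j else 0) :=
    fun j _ => ivN_split A B j f
  rw [Finset.sum_congr rfl this, Finset.sum_add_distrib]
  congr 1
  · rw [Finset.sum_ite_eq' (Finset.range N) A fun j => -f j, if_pos (Finset.mem_range.2 hA)]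
  · rw [← Finset.sum_filter]
    congr 1
    ext j
    simp only [Finset.mem_filter, Finset.mem_range, Finset.mem_Ioc]
    omega

lemma sum_ivN_Ioc (A B C D : ℕ) :
    ∑ j ∈ Finset.Ioc C D, ivN A B j
      = (if A ∈ Finset.Ioc C D then -1 else 0) + ((min D B - max C A : ℕ) : ℤ) := by
  have : ∀ j ∈ Finset.Ioc C D, ivN A B j
      = (if j = A then -(1:ℤ) else 0) + (if A < j ∧ j ≤ B then 1 else 0) := by
    intro j _
    have := ivN_split A B j (fun _ => 1)
    simpa using this
  rw [Finset.sum_congr rfl this, Finset.sum_add_distrib]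
  congr 1
  · rw [Finset.sum_ite_eq' (Finset.Ioc C D) A fun _ => (-1 : ℤ)]
  · rw [← Finset.sum_filter, Finset.sum_const, nsmul_eq_mul, mul_one]
    congr 1
    have : (Finset.Ioc C D).filter (fun j => A < j ∧ j ≤ B) = Finset.Ioc (max C A) (min D B) := by
      ext j
      simp only [Finset.mem_filter, Finset.mem_Ioc]
      omega
    rw [this, Nat.card_Ioc]

lemma sum_indic_Iic (c C D : ℕ) :
    ∑ j ∈ Finset.Ioc C D, (if j ≤ c then (1:ℤ) else 0) = ((min D c - C : ℕ) : ℤ) := by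
  rw [← Finset.sum_filter, Finset.sum_const, nsmul_eq_mul, mul_one]
  congr 1
  have : (Finset.Ioc C D).filter (fun j => j ≤ c) = Finset.Ioc C (min D c) := by
    ext j
    simp only [Finset.mem_filter, Finset.mem_Ioc]
    omega
  rw [this, Nat.card_Ioc]

/-- the ℕ-indexed e-coordinates of a vector -/
def phiOf {t s : ℕ} (x : Fin t ⊕ Fin (s + 1) → ℤ) (j : ℕ) : ℤ :=
  if h : j < s + 1 then x (Sum.inr ⟨j, h⟩) else 0

lemma dot_inr {t s : ℕ} (x : Fin t ⊕ Fin (s + 1) → ℤ) (Ψ : ℕ → ℤ) :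
    dot x (Sum.elim 0 fun j : Fin (s+1) => Ψ (j : ℕ))
      = ∑ j ∈ Finset.range (s + 1), phiOf x j * Ψ j := by
  unfold dot
  rw [Fintype.sum_sum_type]
  simp only [Sum.elim_inl, Pi.zero_apply, mul_zero, Finset.sum_const_zero, zero_add,
    Sum.elim_inr]
  rw [← Fin.sum_univ_eq_sum_range (fun j => phiOf x j * Ψ j) (s+1)]
  apply Finset.sum_congr rfl
  intro j _
  congr 1
  unfold phiOf
  rw [dif_pos j.isLt]

lemma dot_comm {ι : Type*} [Fintype ι] (x y : ι → ℤ) : dot x y = dot y x := by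
  unfold dot; apply Finset.sum_congr rfl; intro i _; ring

lemma claimZ (A B C D s : ℕ) (hAB : A < B) (hB : B ≤ s) (hCD : C < D) (hD : D ≤ s)
    (hAC : A ≠ C) (hAD : A ≠ D) (hCB : C ≠ B) (hdis : min D B ≤ max C A + 1) :
    -(ivN A B C) + ((if A ∈ Finset.Ioc C D then -1 else 0) + ((min D B - max C A : ℕ) : ℤ)) = 0 := by
  simp only [ivN, Finset.mem_Ioc]
  split_ifs <;> omega
section MFacts

variable {s l : ℕ} {m : ℕ → ℕ}

lemma mem_Mset_iff {j : ℕ} : j ∈ Mset s l m ↔ j < s + 1 ∧ ∀ k ≤ l, j ≠ m k := by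
  unfold Mset; simp [Finset.mem_filter]

variable (hm0 : m 0 = 0) (hstep : ∀ K, 1 ≤ K → K ≤ l → m (K - 1) < m K) (hs : s = m l)

include hstep in
lemma m_mono : ∀ K1 K2, K1 ≤ K2 → K2 ≤ l → m K1 ≤ m K2 := by
  intro K1 K2 h12 h2l
  obtain ⟨d, rfl⟩ := Nat.exists_eq_add_of_le h12
  clear h12
  induction d with
  | zero => simp
  | succ d ih =>
    have h1 : K1 + d ≤ l := by omega
    have := hstep (K1 + d + 1) (by omega) (by omega)
    have h2 : K1 + d + 1 - 1 = K1 + d := by omega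
    rw [h2] at this
    have := ih h1
    have hre : m (K1 + (d + 1)) = m (K1 + d + 1) := rfl
    omega

include hstep in
lemma m_smono : ∀ K1 K2, K1 < K2 → K2 ≤ l → m K1 < m K2 := by
  intro K1 K2 h12 h2l
  have h1 := m_mono hstep K1 (K2 - 1) (by omega) (by omega)
  have h2 := hstep K2 (by omega) h2l
  omega

include hstep hs in
lemma m_le_s : ∀ K ≤ l, m K ≤ s := by
  intro K hK; rw [hs]; exact m_mono hstep K l hK le_rfl

include hm0 hs in
lemma Mset_pos {k : ℕ} (hk : k ∈ Mset s l m) : 1 ≤ k ∧ k < s := by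
  rw [mem_Mset_iff] at hk
  have h0 := hk.2 0 (Nat.zero_le l)
  have hl := hk.2 l le_rfl
  omega

include hm0 hstep hs in
lemma gap_mem (K : ℕ) (hK1 : 1 ≤ K) (hKl : K ≤ l) {j : ℕ}
    (h1 : m (K - 1) < j) (h2 : j < m K) : j ∈ Mset s l m := by
  rw [mem_Mset_iff]
  have hKs := m_le_s hstep hs K hKl
  refine ⟨by omega, fun k hk => ?_⟩
  rcases le_or_gt k (K - 1) with hle | hlt
  · have := m_mono hstep k (K - 1) hle (by omega)
    omega
  · have := m_mono hstep K k (by omega) hk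
    omega

lemma not_mem_Mset {j : ℕ} (hj : j ≤ s) (h : j ∉ Mset s l m) : ∃ K ≤ l, j = m K := by
  rw [mem_Mset_iff] at h
  push_neg at h
  obtain ⟨K, hK, hj'⟩ := h (by omega)
  exact ⟨K, hK, hj'⟩

-- minM facts
include hm0 hs in
lemma minM_le_s : minM s l m ≤ s := by
  unfold minM
  split_ifs with h
  · have := (Mset s l m).min'_mem h
    exact (Mset_pos hm0 hs this).2.le
  · exact le_rfl

lemma minM_min {j : ℕ} (hj : j ∈ Mset s l m) : minM s l m ≤ j := by
  unfold minM
  rw [dif_pos ⟨j, hj⟩]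
  exact Finset.min'_le _ _ hj

include hm0 hs in
lemma minM_mem (h : minM s l m < s) : minM s l m ∈ Mset s l m := by
  unfold minM at h ⊢
  split_ifs at h ⊢ with hne
  · exact (Mset s l m).min'_mem hne
  · omega

-- nxt facts
include hm0 hs in
lemma nxt_facts {A : ℕ} (hA : A ∈ Mset s l m) :
    A < nxt s l m A ∧ nxt s l m A ≤ s ∧ (∀ j ∈ Mset s l m, A < j → nxt s l m A ≤ j)
      ∧ (nxt s l m A ∈ Mset s l m ∨ nxt s l m A = s) := by
  have hAs := Mset_pos hm0 hs hA
  unfold nxt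
  split_ifs with h
  · have hmem := Finset.min'_mem _ h
    rw [Finset.mem_filter] at hmem
    refine ⟨hmem.2, (Mset_pos hm0 hs hmem.1).2.le, fun j hj hAj => ?_, Or.inl hmem.1⟩
    exact Finset.min'_le _ _ (Finset.mem_filter.2 ⟨hj, hAj⟩)
  · refine ⟨hAs.2, le_rfl, fun j hj hAj => ?_, Or.inr rfl⟩
    exact absurd ⟨j, Finset.mem_filter.2 ⟨hj, hAj⟩⟩ h

end MFacts
section EFacts

/-- enumeration of `Mset` in increasing order -/
def eF (s l : ℕ) (m : ℕ → ℕ) (j : ℕ) : ℕ := ((Mset s l m).sort (· ≤ ·)).getD j 0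

variable {s l : ℕ} {m : ℕ → ℕ}

lemma eF_getElem {j : ℕ} (hj : j < (Mset s l m).card) :
    eF s l m j = ((Mset s l m).sort (· ≤ ·))[j]'(by rwa [Finset.length_sort]) := by
  unfold eF
  exact List.getD_eq_getElem _ _ (by rwa [Finset.length_sort])

lemma eF_mem {j : ℕ} (hj : j < (Mset s l m).card) : eF s l m j ∈ Mset s l m := by
  rw [eF_getElem hj, ← Finset.mem_sort (α := ℕ) (· ≤ ·)]
  exact List.getElem_mem _

lemma eF_smono {i j : ℕ} (hij : i < j) (hj : j < (Mset s l m).card) :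
    eF s l m i < eF s l m j := by
  rw [eF_getElem (lt_trans hij hj), eF_getElem hj]
  have hs := Finset.sortedLT_sort (Mset s l m)
  have hlen : ((Mset s l m).sort (· ≤ ·)).length = (Mset s l m).card := Finset.length_sort _
  exact hs.getElem_lt_getElem_iff.2 hij

lemma eF_mono {i j : ℕ} (hij : i ≤ j) (hj : j < (Mset s l m).card) :
    eF s l m i ≤ eF s l m j := by
  rcases eq_or_lt_of_le hij with rfl | hlt
  · exact le_rfl
  · exact (eF_smono hlt hj).le

lemma eF_surj {k : ℕ} (hk : k ∈ Mset s l m) : ∃ i < (Mset s l m).card, eF s l m i = k := by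
  rw [← Finset.mem_sort (α := ℕ) (· ≤ ·)] at hk
  obtain ⟨i, hi, hik⟩ := List.mem_iff_getElem.1 hk
  rw [Finset.length_sort] at hi
  exact ⟨i, hi, by rw [eF_getElem hi]; exact hik⟩

lemma eF_zero (h : (Mset s l m).card ≠ 0) : minM s l m = eF s l m 0 := by
  have hne : (Mset s l m).Nonempty := Finset.card_pos.1 (by omega)
  unfold minM
  rw [dif_pos hne, Finset.min'_eq_sorted_zero, eF_getElem (by omega)]

variable (hm0 : m 0 = 0) (hstep : ∀ K, 1 ≤ K → K ≤ l → m (K - 1) < m K) (hs : s = m l)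

include hm0 hs in
lemma eF_nxt {i : ℕ} (hi : i + 1 < (Mset s l m).card) :
    nxt s l m (eF s l m i) = eF s l m (i + 1) := by
  have hAmem := eF_mem (lt_trans (Nat.lt_succ_self i) hi)
  obtain ⟨h1, h2, h3, h4⟩ := nxt_facts hm0 hs hAmem
  have hle : nxt s l m (eF s l m i) ≤ eF s l m (i + 1) :=
    h3 _ (eF_mem hi) (eF_smono (Nat.lt_succ_self i) hi)
  have hge : eF s l m (i + 1) ≤ nxt s l m (eF s l m i) := by
    rcases h4 with hmem | hns
    · obtain ⟨j, hj, hjk⟩ := eF_surj hmem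
      have hij : i < j := by
        by_contra hc
        have := eF_mono (Nat.le_of_not_lt hc) (lt_trans (Nat.lt_succ_self i) hi)
        omega
      rw [← hjk]
      exact eF_mono hij hj
    · rw [hns]
      exact (Mset_pos hm0 hs (eF_mem hi)).2.le
  omega

include hm0 hs in
lemma eF_nxt_last (h : (Mset s l m).card ≠ 0) :
    nxt s l m (eF s l m ((Mset s l m).card - 1)) = s := by
  have hAmem := eF_mem (s := s) (l := l) (m := m) (j := (Mset s l m).card - 1) (by omega)
  obtain ⟨h1, h2, h3, h4⟩ := nxt_facts hm0 hs hAmem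
  rcases h4 with hmem | hns
  · obtain ⟨j, hj, hjk⟩ := eF_surj hmem
    have : eF s l m ((Mset s l m).card - 1) < eF s l m j := by omega
    have hij : (Mset s l m).card - 1 < j := by
      by_contra hc
      have := eF_mono (Nat.le_of_not_lt hc) (by omega : (Mset s l m).card - 1 < (Mset s l m).card)
      omega
    omega
  · exact hns

/-- the number of elements of `M` below `pos` -/
def cardF (s l : ℕ) (m : ℕ → ℕ) (pos : ℕ) : ℕ := ((Mset s l m).filter (· < pos)).card

lemma cardF_le (pos : ℕ) : cardF s l m pos ≤ (Mset s l m).card :=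
  Finset.card_filter_le _ _

lemma eF_lt_iff {pos j : ℕ} (hj : j < (Mset s l m).card) :
    eF s l m j < pos ↔ j < cardF s l m pos := by
  constructor
  · intro hlt
    have hsub : (Finset.range (j + 1)).image (eF s l m) ⊆ (Mset s l m).filter (· < pos) := by
      intro k hk
      obtain ⟨i, hi, rfl⟩ := Finset.mem_image.1 hk
      rw [Finset.mem_range] at hi
      have hik : i < (Mset s l m).card := by omega
      refine Finset.mem_filter.2 ⟨eF_mem hik, ?_⟩
      have := eF_mono (by omega : i ≤ j) hj
      omega
    have hcard : ((Finset.range (j + 1)).image (eF s l m)).card = j + 1 := by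
      rw [Finset.card_image_of_injOn, Finset.card_range]
      intro x hx y hy hxy
      rw [Finset.mem_coe, Finset.mem_range] at hx hy
      by_contra hne
      rcases Nat.lt_or_ge x y with hl | hl
      · have := eF_smono (s := s) (l := l) (m := m) hl (by omega); omega
      · have := eF_smono (s := s) (l := l) (m := m) (by omega : y < x) (by omega); omega
    have := Finset.card_le_card hsub
    unfold cardF
    omega
  · intro hlt
    by_contra hc
    push_neg at hc
    have hsub : (Mset s l m).filter (· < pos) ⊆ (Finset.range j).image (eF s l m) := by
      intro k hk
      rw [Finset.mem_filter] at hk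
      obtain ⟨i, hi, rfl⟩ := eF_surj hk.1
      refine Finset.mem_image.2 ⟨i, Finset.mem_range.2 ?_, rfl⟩
      by_contra hc2
      have := eF_mono (Nat.le_of_not_lt hc2) hi
      omega
    have := Finset.card_le_card hsub
    have := Finset.card_image_le (f := eF s l m) (s := Finset.range j)
    rw [Finset.card_range] at this
    unfold cardF at hlt
    omega

end EFacts
section VFacts

variable {t s l : ℕ} {m : ℕ → ℕ}

lemma wk_eq (K : ℕ) : wk t s m K = Sum.elim (0 : Fin t → ℤ) fun j : Fin (s+1) => ivN (m (K-1)) (m K) (j:ℕ) := rfl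

lemma vK_eq (k : ℕ) :
    vKvec t s l m k = Sum.elim (0 : Fin t → ℤ) fun j : Fin (s+1) => ivN k (nxt s l m k) (j:ℕ) := rfl

lemma v0_eq :
    v0vec t s l m = Sum.elim (0 : Fin t → ℤ) fun j : Fin (s+1) => (if (j:ℕ) ≤ minM s l m then (1:ℤ) else 0) := rfl

lemma phiOf_v0 {j : ℕ} (hj : j ≤ s) :
    phiOf (v0vec t s l m) j = if j ≤ minM s l m then 1 else 0 := by
  unfold phiOf
  rw [dif_pos (by omega : j < s + 1)]
  rfl

lemma phiOf_vK {k j : ℕ} (hj : j ≤ s) :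
    phiOf (vKvec t s l m k) j = ivN k (nxt s l m k) j := by
  unfold phiOf
  rw [dif_pos (by omega : j < s + 1)]
  rfl

lemma vSeq_pos (i : ℕ) (hi : i ≠ 0) : vSeq t s l m i = vKvec t s l m (eF s l m (i - 1)) := by
  unfold vSeq eF
  rw [if_neg hi]

variable (hm0 : m 0 = 0) (hstep : ∀ K, 1 ≤ K → K ≤ l → m (K - 1) < m K) (hs3 : s = m l)

include hstep hs3 in
lemma dot_wk_eq (x : Fin t ⊕ Fin (s + 1) → ℤ) (K : ℕ) (hK1 : 1 ≤ K) (hKl : K ≤ l) :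
    dot x (wk t s m K) = -phiOf x (m (K-1)) + ∑ j ∈ Finset.Ioc (m (K-1)) (m K), phiOf x j := by
  rw [wk_eq, dot_inr, sum_mul_ivN]
  · have := m_le_s hstep hs3 (K-1) (by omega); omega
  · have := m_le_s hstep hs3 K hKl; omega

include hm0 hstep hs3 in
lemma v0_mem_LF : v0vec t s l m ∈ LFset t s l m := by
  constructor
  · intro i; rfl
  intro K hK1 hKl
  rw [dot_wk_eq hstep hs3 _ K hK1 hKl]
  have hCD : m (K-1) < m K := hstep K hK1 hKl
  have hD : m K ≤ s := m_le_s hstep hs3 K hKl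
  have hc := minM_le_s hm0 hs3 (l := l) (m := m)
  rw [phiOf_v0 (by omega)]
  rw [Finset.sum_congr rfl (fun j hj => phiOf_v0 (by
    rw [Finset.mem_Ioc] at hj; omega))]
  rw [sum_indic_Iic]
  have hCc : m (K - 1) ≠ minM s l m := by
    intro hCeq
    have hlt : minM s l m < s := by omega
    have := (mem_Mset_iff.1 (minM_mem hm0 hs3 hlt)).2 (K-1) (by omega)
    omega
  have hdis : min (m K) (minM s l m) ≤ m (K-1) + 1 := by
    by_contra hcon
    push_neg at hcon
    have hmem : m (K-1) + 1 ∈ Mset s l m :=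
      gap_mem hm0 hstep hs3 K hK1 hKl (by omega) (by omega)
    have := minM_min hmem
    omega
  split_ifs <;> omega

include hm0 hstep hs3 in
lemma vK_mem_LF {A : ℕ} (hA : A ∈ Mset s l m) : vKvec t s l m A ∈ LFset t s l m := by
  obtain ⟨hN1, hN2, hN3, hN4⟩ := nxt_facts hm0 hs3 hA
  constructor
  · intro i; rfl
  intro K hK1 hKl
  rw [dot_wk_eq hstep hs3 _ K hK1 hKl]
  have hCD : m (K-1) < m K := hstep K hK1 hKl
  have hD : m K ≤ s := m_le_s hstep hs3 K hKl
  rw [phiOf_vK (by omega)]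
  rw [Finset.sum_congr rfl (fun j hj => phiOf_vK (by
    rw [Finset.mem_Ioc] at hj; omega))]
  rw [sum_ivN_Ioc]
  have hMA := mem_Mset_iff.1 hA
  have hAC : A ≠ m (K-1) := hMA.2 (K-1) (by omega)
  have hAD : A ≠ m K := hMA.2 K hKl
  have hCB : m (K-1) ≠ nxt s l m A := by
    rcases hN4 with hmem | hns
    · intro hc; exact (mem_Mset_iff.1 hmem).2 (K-1) (by omega) hc.symm
    · omega
  have hdis : min (m K) (nxt s l m A) ≤ max (m (K-1)) A + 1 := by
    by_contra hcon
    push_neg at hcon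
    have hmem : max (m (K-1)) A + 1 ∈ Mset s l m :=
      gap_mem hm0 hstep hs3 K hK1 hKl (by omega) (by omega)
    have := hN3 _ hmem (by omega)
    omega
  exact claimZ A (nxt s l m A) (m (K-1)) (m K) s hN1 hN2 hCD hD hAC hAD hCB hdis

include hm0 hstep hs3 in
lemma vSeq_mem_LF : ∀ i ≤ (Mset s l m).card, vSeq t s l m i ∈ LFset t s l m := by
  intro i hi
  rcases Nat.eq_zero_or_pos i with rfl | hpos
  · rw [show vSeq t s l m 0 = v0vec t s l m from if_pos rfl]
    exact v0_mem_LF hm0 hstep hs3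
  · rw [vSeq_pos i (by omega)]
    exact vK_mem_LF hm0 hstep hs3 (eF_mem (by omega))

end VFacts
section DotV

variable {t s l : ℕ} {m : ℕ → ℕ}
variable (hm0 : m 0 = 0) (hstep : ∀ K, 1 ≤ K → K ≤ l → m (K - 1) < m K) (hs3 : s = m l)

include hm0 hstep hs3 in
lemma dot_v0_vK {A : ℕ} (hA : A ∈ Mset s l m) :
    dot (v0vec t s l m) (vKvec t s l m A)
      = if A = minM s l m then -1 else 0 := by
  obtain ⟨hN1, hN2, hN3, hN4⟩ := nxt_facts hm0 hs3 hA
  have hAp := Mset_pos hm0 hs3 hA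
  rw [vK_eq, dot_inr, sum_mul_ivN _ _ _ _ (by omega) (by omega)]
  rw [phiOf_v0 (by omega)]
  rw [Finset.sum_congr rfl (fun j hj => phiOf_v0 (by
    rw [Finset.mem_Ioc] at hj; omega))]
  rw [sum_indic_Iic]
  have hcle := minM_min hA
  split_ifs <;> omega

include hm0 hstep hs3 in
lemma dot_vK_vK {A A' : ℕ} (hA : A ∈ Mset s l m) (hA' : A' ∈ Mset s l m) (hlt : A < A')
    (hB : nxt s l m A ≤ A') :
    dot (vKvec t s l m A) (vKvec t s l m A')
      = if nxt s l m A = A' then -1 else 0 := by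
  obtain ⟨hN1, hN2, hN3, hN4⟩ := nxt_facts hm0 hs3 hA
  obtain ⟨hN1', hN2', hN3', hN4'⟩ := nxt_facts hm0 hs3 hA'
  have hAp := Mset_pos hm0 hs3 hA
  have hAp' := Mset_pos hm0 hs3 hA'
  rw [vK_eq A', dot_inr, sum_mul_ivN _ _ _ _ (by omega) (by omega)]
  rw [phiOf_vK (by omega)]
  rw [Finset.sum_congr rfl (fun j hj => phiOf_vK (by
    rw [Finset.mem_Ioc] at hj; omega))]
  rw [sum_ivN_Ioc]
  simp only [ivN, Finset.mem_Ioc]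
  split_ifs <;> omega

include hm0 hstep hs3 in
lemma dot_vK_w0 {A : ℕ} (hA : A ∈ Mset s l m) (σ : Fin t → ℤ) :
    dot (vKvec t s l m A) (w0 t s σ) = 0 := by
  obtain ⟨hN1, hN2, hN3, hN4⟩ := nxt_facts hm0 hs3 hA
  have hAp := Mset_pos hm0 hs3 hA
  rw [dot_comm, show (vKvec t s l m A : Fin t ⊕ Fin (s+1) → ℤ)
    = Sum.elim (0 : Fin t → ℤ) fun j : Fin (s+1) => ivN A (nxt s l m A) (j:ℕ) from rfl,
    dot_inr, sum_mul_ivN _ _ _ _ (by omega) (by omega)]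
  have hw0 : ∀ j : ℕ, j ≤ s → phiOf (w0 t s σ) j = if j = 0 then 1 else 0 := by
    intro j hj
    unfold phiOf
    rw [dif_pos (by omega : j < s + 1)]
    rfl
  rw [hw0 A (by omega), if_neg (by omega)]
  have hz : ∑ j ∈ Finset.Ioc A (nxt s l m A), phiOf (w0 t s σ) j = 0 :=
    Finset.sum_eq_zero (fun j hj => by
      rw [Finset.mem_Ioc] at hj
      rw [hw0 j (by omega), if_neg (by omega)])
  rw [hz]
  ring

end DotV
section Psi

variable {t s l : ℕ} {m : ℕ → ℕ}

/-- e-coordinates of the `v` vectors at the ℕ level -/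
def psiF (s l : ℕ) (m : ℕ → ℕ) (i pos : ℕ) : ℤ :=
  if i = 0 then (if pos ≤ minM s l m then 1 else 0)
  else ivN (eF s l m (i-1)) (nxt s l m (eF s l m (i-1))) pos

lemma vSeq_inr (i : ℕ) (j : Fin (s+1)) :
    vSeq t s l m i (Sum.inr j) = psiF s l m i (j : ℕ) := by
  unfold vSeq psiF eF
  split
  · rfl
  · rfl

lemma sum_two {n : ℕ} (a b : Fin n) (hab : a ≠ b) (f g : Fin n → ℤ) :
    ∑ i, (if i = a then f i else if i = b then g i else 0) = f a + g b := by
  have key : ∀ i : Fin n, (if i = a then f i else if i = b then g i else 0)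
      = (if i = a then f i else 0) + (if i = b then g i else 0) := by
    intro i
    by_cases h1 : i = a
    · subst h1
      rw [if_pos rfl, if_pos rfl, if_neg hab, add_zero]
    · rw [if_neg h1, if_neg h1, zero_add]
  rw [Finset.sum_congr rfl (fun i _ => key i), Finset.sum_add_distrib,
    Finset.sum_ite_eq' Finset.univ a f, Finset.sum_ite_eq' Finset.univ b g,
    if_pos (Finset.mem_univ a), if_pos (Finset.mem_univ b)]

lemma sum_one {n : ℕ} (a : Fin n) (f : Fin n → ℤ) :
    ∑ i, (if i = a then f i else 0) = f a := by
  rw [Finset.sum_ite_eq' Finset.univ a f, if_pos (Finset.mem_univ a)]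

variable (hm0 : m 0 = 0) (hstep : ∀ K, 1 ≤ K → K ≤ l → m (K - 1) < m K) (hs3 : s = m l)

include hm0 hstep hs3 in
lemma psi_at_eF {i0 : ℕ} (h1 : 1 ≤ i0) (h2 : i0 ≤ (Mset s l m).card) :
    ∀ i ≤ (Mset s l m).card, psiF s l m i (eF s l m (i0-1))
      = if i = i0-1 then 1 else if i = i0 then -1 else 0 := by
  intro i hi
  have hcard0 : (Mset s l m).card ≠ 0 := by omega
  by_cases hi0 : i = 0
  · subst hi0
    rw [psiF, if_pos rfl, eF_zero hcard0]
    rcases Nat.eq_or_lt_of_le h1 with heq | hlt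
    · rw [← heq]
      simp
    · have hkey : eF s l m 0 < eF s l m (i0-1) :=
        eF_smono (by omega) (by omega)
      split_ifs <;> omega
  · rw [psiF, if_neg hi0, ivN]
    have him1 : i - 1 < (Mset s l m).card := by omega
    have hi01 : i0 - 1 < (Mset s l m).card := by omega
    by_cases heq : i = i0
    · subst heq
      rw [if_pos rfl, if_neg (by omega), if_pos rfl]
    · by_cases hadj : i = i0 - 1
      · have hi02 : 2 ≤ i0 := by omega
        have hnx : nxt s l m (eF s l m (i-1)) = eF s l m (i0-1) := by
          rw [show i - 1 = i0 - 2 by omega]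
          rw [show i0 - 1 = i0 - 2 + 1 by omega] at hi01 ⊢
          exact eF_nxt hm0 hs3 hi01
        have hlt2 : eF s l m (i-1) < eF s l m (i0-1) :=
          eF_smono (by omega) hi01
        rw [hnx]
        split_ifs <;> omega
      · rcases Nat.lt_or_ge i i0 with hlt | hge
        · have hii : i < i0 - 1 := by omega
          have hicard : i < (Mset s l m).card := by omega
          have hnx : nxt s l m (eF s l m (i-1)) = eF s l m i := by
            rw [show i = i - 1 + 1 by omega] at hicard ⊢
            exact eF_nxt hm0 hs3 hicard
          have hlt2 : eF s l m i < eF s l m (i0-1) := eF_smono (by omega) hi01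
          have hlt3 : eF s l m (i-1) < eF s l m i := eF_smono (by omega) hicard
          rw [hnx]
          split_ifs <;> omega
        · have hlt2 : eF s l m (i0-1) < eF s l m (i-1) :=
            eF_smono (by omega) him1
          split_ifs <;> omega

include hm0 hstep hs3 in
lemma psi_not_mem {pos : ℕ} (hpos : pos ≤ s) (hnm : pos ∉ Mset s l m) :
    ∀ i ≤ (Mset s l m).card, psiF s l m i pos
      = if i = cardF s l m pos then 1 else 0 := by
  intro i hi
  have hi0le : cardF s l m pos ≤ (Mset s l m).card := cardF_le pos
  by_cases hi0 : i = 0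
  · subst hi0
    rw [psiF, if_pos rfl]
    rcases Nat.eq_zero_or_pos (Mset s l m).card with hcz | hcp
    · have hminM : minM s l m = s := by
        have h1 := minM_le_s hm0 hs3 (l := l) (m := m)
        rcases Nat.lt_or_ge (minM s l m) s with hlt | hge
        · exact absurd (Finset.card_ne_zero_of_mem (minM_mem hm0 hs3 hlt)) (by omega)
        · omega
      split_ifs <;> omega
    · have hiff := eF_lt_iff (pos := pos) (j := 0) hcp
      have h0 := eF_zero (s := s) (l := l) (m := m) (by omega)
      split_ifs <;> omega
  · rw [psiF, if_neg hi0, ivN]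
    have him1 : i - 1 < (Mset s l m).card := by omega
    have hne : pos ≠ eF s l m (i-1) := by
      intro hcon
      exact hnm (hcon ▸ eF_mem him1)
    have hlt1 := eF_lt_iff (pos := pos) him1
    rcases Nat.lt_or_ge i (Mset s l m).card with hicard | hicard
    · have hnx : nxt s l m (eF s l m (i-1)) = eF s l m i := by
        rw [show i = i - 1 + 1 by omega] at hicard ⊢
        exact eF_nxt hm0 hs3 hicard
      have hlt2 := eF_lt_iff (pos := pos) hicard
      rw [hnx]
      split_ifs <;> omega
    · have hieq : i = (Mset s l m).card := by omega
      have hnx : nxt s l m (eF s l m (i-1)) = s := by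
        rw [hieq]
        exact eF_nxt_last hm0 hs3 (by omega)
      rw [hnx]
      split_ifs <;> omega

lemma sumv_apply (c : Fin ((Mset s l m).card + 1) → ℤ) (j : Fin (s+1)) :
    (∑ i : Fin ((Mset s l m).card + 1), c i • vSeq t s l m (i:ℕ)) (Sum.inr j)
      = ∑ i : Fin ((Mset s l m).card + 1), c i * psiF s l m (i:ℕ) (j:ℕ) := by
  rw [Finset.sum_apply]
  exact Finset.sum_congr rfl (fun i _ => by
    rw [Pi.smul_apply, smul_eq_mul, vSeq_inr])

include hm0 hstep hs3 in
lemma sumv_at_eF (c : Fin ((Mset s l m).card + 1) → ℤ) {i0 : ℕ} (h1 : 1 ≤ i0)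
    (h2 : i0 ≤ (Mset s l m).card) (j : Fin (s+1)) (hj : (j:ℕ) = eF s l m (i0-1))
    (a b : Fin ((Mset s l m).card + 1)) (ha : (a:ℕ) = i0-1) (hb : (b:ℕ) = i0) :
    (∑ i : Fin ((Mset s l m).card + 1), c i • vSeq t s l m (i:ℕ)) (Sum.inr j)
      = c a - c b := by
  rw [sumv_apply]
  have key : ∀ i : Fin ((Mset s l m).card + 1), c i * psiF s l m (i:ℕ) (j:ℕ)
      = if i = a then c i else if i = b then -c i else 0 := by
    intro i
    have hile : (i:ℕ) ≤ (Mset s l m).card := Nat.lt_succ_iff.mp i.isLt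
    rw [hj, psi_at_eF hm0 hstep hs3 h1 h2 (i:ℕ) hile]
    have hfa : i = a ↔ (i:ℕ) = i0-1 := by rw [Fin.ext_iff, ha]
    have hfb : i = b ↔ (i:ℕ) = i0 := by rw [Fin.ext_iff, hb]
    by_cases hca : (i:ℕ) = i0 - 1
    · rw [if_pos hca, if_pos (hfa.2 hca), mul_one]
    · rw [if_neg hca, if_neg (fun hc => hca (hfa.1 hc))]
      by_cases hcb : (i:ℕ) = i0
      · rw [if_pos hcb, if_pos (hfb.2 hcb)]; ring
      · rw [if_neg hcb, if_neg (fun hc => hcb (hfb.1 hc)), mul_zero]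
  rw [Finset.sum_congr rfl (fun i _ => key i),
    sum_two a b (by rw [Ne, Fin.ext_iff, ha, hb]; omega) c (fun i => -c i)]
  ring

include hm0 hstep hs3 in
lemma sumv_at_nm (c : Fin ((Mset s l m).card + 1) → ℤ) (j : Fin (s+1))
    (hnm : (j:ℕ) ∉ Mset s l m) (a : Fin ((Mset s l m).card + 1))
    (ha : (a:ℕ) = cardF s l m (j:ℕ)) :
    (∑ i : Fin ((Mset s l m).card + 1), c i • vSeq t s l m (i:ℕ)) (Sum.inr j)
      = c a := by
  rw [sumv_apply]
  have key : ∀ i : Fin ((Mset s l m).card + 1), c i * psiF s l m (i:ℕ) (j:ℕ)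
      = if i = a then c i else 0 := by
    intro i
    have hile : (i:ℕ) ≤ (Mset s l m).card := Nat.lt_succ_iff.mp i.isLt
    rw [psi_not_mem hm0 hstep hs3 (by omega : (j:ℕ) ≤ s) hnm (i:ℕ) hile]
    have hfa : i = a ↔ (i:ℕ) = cardF s l m (j:ℕ) := by rw [Fin.ext_iff, ha]
    by_cases hca : (i:ℕ) = cardF s l m (j:ℕ)
    · rw [if_pos hca, if_pos (hfa.2 hca), mul_one]
    · rw [if_neg hca, if_neg (fun hc => hca (hfa.1 hc)), mul_zero]
  rw [Finset.sum_congr rfl (fun i _ => key i), sum_one a c]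

end Psi
section Basis

variable {t s l : ℕ} {m : ℕ → ℕ}

/-- coefficient of `x` on `v_i` -/
def ccoef (s l : ℕ) (m : ℕ → ℕ) (x : Fin t ⊕ Fin (s + 1) → ℤ) (i : ℕ) : ℤ :=
  phiOf x 0 - ∑ j' ∈ Finset.range i, phiOf x (eF s l m j')

lemma phiOf_inr (x : Fin t ⊕ Fin (s + 1) → ℤ) (j : Fin (s + 1)) :
    phiOf x (j : ℕ) = x (Sum.inr j) := by
  unfold phiOf
  rw [dif_pos j.isLt]

lemma cardF_zero : cardF s l m 0 = 0 := by
  unfold cardF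
  rw [Finset.card_eq_zero]
  ext k
  simp

lemma zero_not_mem_M (hm0 : m 0 = 0) (hs3 : s = m l) : (0:ℕ) ∉ Mset s l m := by
  intro hc
  have := Mset_pos hm0 hs3 hc
  omega

variable (hm0 : m 0 = 0) (hstep : ∀ K, 1 ≤ K → K ≤ l → m (K - 1) < m K) (hs3 : s = m l)

include hstep hs3 in
lemma LF_constraint {x : Fin t ⊕ Fin (s + 1) → ℤ} (hx : x ∈ LFset t s l m)
    {K : ℕ} (hK1 : 1 ≤ K) (hKl : K ≤ l) :
    phiOf x (m (K-1)) = ∑ j ∈ Finset.Ioc (m (K-1)) (m K), phiOf x j := by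
  have := hx.2 K hK1 hKl
  rw [dot_wk_eq hstep hs3 x K hK1 hKl] at this
  linarith

include hm0 hstep hs3 in
lemma key_ind {x : Fin t ⊕ Fin (s + 1) → ℤ} (hx : x ∈ LFset t s l m) :
    ∀ K ≤ l, phiOf x (m K) = ccoef s l m x (cardF s l m (m K)) := by
  intro K
  induction K with
  | zero =>
    intro _
    rw [hm0, cardF_zero]
    unfold ccoef
    simp
  | succ K ih =>
    intro hKl
    have hKl' : K ≤ l := by omega
    have hcon := LF_constraint hstep hs3 hx (K := K + 1) (by omega) hKl
    rw [show K + 1 - 1 = K by omega] at hcon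
    have hCD : m K < m (K+1) := by
      have := hstep (K+1) (by omega) hKl
      rw [show K + 1 - 1 = K by omega] at this
      exact this
    have hsplit : ∑ j ∈ Finset.Ioc (m K) (m (K+1)), phiOf x j
        = ∑ j ∈ Finset.Ioo (m K) (m (K+1)), phiOf x j + phiOf x (m (K+1)) := by
      rw [← Finset.Ioo_insert_right hCD, Finset.sum_insert (by simp)]
      ring
    set c1 := cardF s l m (m K) with hc1
    set c2 := cardF s l m (m (K+1)) with hc2
    have hc1c2 : c1 ≤ c2 := by
      apply Finset.card_le_card
      intro k hk
      rw [Finset.mem_filter] at hk ⊢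
      have := m_mono hstep K (K+1) (by omega) hKl
      exact ⟨hk.1, by omega⟩
    have hc2card : c2 ≤ (Mset s l m).card := cardF_le _
    have himg : (Finset.Ico c1 c2).image (eF s l m) = Finset.Ioo (m K) (m (K+1)) := by
      ext k
      rw [Finset.mem_image, Finset.mem_Ioo]
      constructor
      · rintro ⟨j', hj', rfl⟩
        rw [Finset.mem_Ico] at hj'
        have hj'c : j' < (Mset s l m).card := by omega
        have h1 : eF s l m j' < m (K+1) := (eF_lt_iff hj'c).2 (by omega)
        have h2 : ¬ eF s l m j' < m K := fun hcc => by
          have := (eF_lt_iff (pos := m K) hj'c).1 hcc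
          omega
        have h3 : eF s l m j' ≠ m K :=
          (mem_Mset_iff.1 (eF_mem hj'c)).2 K hKl'
        omega
      · intro hk
        have hkM : k ∈ Mset s l m := by
          apply gap_mem hm0 hstep hs3 (K+1) (by omega) hKl
          · rw [show K + 1 - 1 = K by omega]; omega
          · omega
        obtain ⟨j', hj'c, rfl⟩ := eF_surj hkM
        refine ⟨j', Finset.mem_Ico.2 ⟨?_, ?_⟩, rfl⟩
        · by_contra hcc
          have := (eF_lt_iff (pos := m K) hj'c).2 (by omega)
          omega
        · exact (eF_lt_iff hj'c).1 (by omega)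
    have hsum_eq : ∑ j' ∈ Finset.Ico c1 c2, phiOf x (eF s l m j')
        = ∑ j ∈ Finset.Ioo (m K) (m (K+1)), phiOf x j := by
      rw [← himg, Finset.sum_image]
      intro a ha b hb hab
      rw [Finset.mem_coe, Finset.mem_Ico] at ha hb
      by_contra hne
      rcases Nat.lt_or_ge a b with hl | hl
      · have := eF_smono (s := s) (l := l) (m := m) hl (by omega); omega
      · have := eF_smono (s := s) (l := l) (m := m) (show b < a by omega) (by omega); omega
    have hranges : ∑ j' ∈ Finset.range c2, phiOf x (eF s l m j')
        = ∑ j' ∈ Finset.range c1, phiOf x (eF s l m j')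
          + ∑ j' ∈ Finset.Ico c1 c2, phiOf x (eF s l m j') := by
      simp only [Finset.range_eq_Ico]
      exact (Finset.sum_Ico_consecutive _ (Nat.zero_le c1) hc1c2).symm
    have hih := ih hKl'
    unfold ccoef at hih ⊢
    rw [hranges, hsum_eq]
    rw [hsplit] at hcon
    linarith

include hm0 hstep hs3 in
lemma exists_coef {x : Fin t ⊕ Fin (s + 1) → ℤ} (hx : x ∈ LFset t s l m) :
    x = ∑ i : Fin ((Mset s l m).card + 1),
      (fun i : Fin ((Mset s l m).card + 1) => ccoef s l m x (i : ℕ)) i • vSeq t s l m (i : ℕ) := by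
  funext p
  rcases p with ii | j
  · rw [Finset.sum_apply]
    rw [hx.1 ii]
    symm
    apply Finset.sum_eq_zero
    intro i _
    rw [Pi.smul_apply, smul_eq_mul]
    have : vSeq t s l m (i:ℕ) (Sum.inl ii) = 0 := by
      unfold vSeq
      split <;> rfl
    rw [this, mul_zero]
  · by_cases hmem : (j : ℕ) ∈ Mset s l m
    · obtain ⟨i0', hi0', heF⟩ := eF_surj hmem
      rw [sumv_at_eF hm0 hstep hs3 _ (show 1 ≤ i0' + 1 by omega) (by omega) j
        (by rw [show i0' + 1 - 1 = i0' by omega, heF]) ⟨i0', by omega⟩ ⟨i0' + 1, by omega⟩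
        (by simp) (by simp)]
      simp only
      unfold ccoef
      rw [Finset.sum_range_succ, heF, phiOf_inr]
      ring
    · have hjs : (j : ℕ) ≤ s := by
        have := j.isLt; omega
      obtain ⟨K, hKl, hjm⟩ := not_mem_Mset hjs hmem
      rw [sumv_at_nm hm0 hstep hs3 _ j hmem ⟨cardF s l m (j:ℕ), by
        have := cardF_le (s := s) (l := l) (m := m) (j:ℕ); omega⟩ rfl]
      simp only
      rw [← phiOf_inr x j, hjm]
      exact key_ind hm0 hstep hs3 hx K hKl

include hm0 hstep hs3 in
lemma lin_indep (d : Fin ((Mset s l m).card + 1) → ℤ)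
    (hd : ∑ i : Fin ((Mset s l m).card + 1), d i • vSeq t s l m (i : ℕ) = 0) :
    d = 0 := by
  have key : ∀ N ≤ (Mset s l m).card, ∀ hN : N < (Mset s l m).card + 1, d ⟨N, hN⟩ = 0 := by
    intro N
    induction N with
    | zero =>
      intro _ hN
      have h0 : ((0 : Fin (s+1)) : ℕ) ∉ Mset s l m := by
        have h00 : ((0 : Fin (s+1)) : ℕ) = 0 := rfl
        rw [h00]
        exact zero_not_mem_M hm0 hs3
      have ha : ((⟨0, hN⟩ : Fin ((Mset s l m).card + 1)) : ℕ)
          = cardF s l m ((0 : Fin (s+1)) : ℕ) := by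
        simp [cardF_zero]
      have heq := sumv_at_nm (t := t) hm0 hstep hs3 d 0 h0 ⟨0, hN⟩ ha
      rw [hd] at heq
      simpa using heq.symm
    | succ N ih =>
      intro hNle hN
      have hNc : N < (Mset s l m).card := by omega
      have heFs : eF s l m N < s + 1 := by
        have := Mset_pos hm0 hs3 (eF_mem hNc)
        omega
      have := sumv_at_eF (t := t) hm0 hstep hs3 d (show 1 ≤ N + 1 by omega) (by omega)
        ⟨eF s l m N, heFs⟩ (by simp) ⟨N, by omega⟩ ⟨N + 1, hN⟩ (by simp) (by simp)
      rw [hd] at this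
      simp only [Pi.zero_apply] at this
      have hihv := ih (by omega) (by omega)
      rw [hihv] at this
      omega
  funext i
  have := key (i : ℕ) (by omega) i.isLt
  simpa using this

end Basis
/-- Section 6.1 of the paper: the vectors `v_0, v_1, …, v_m` form a ℤ-basis of
the fractional part `L_F`, satisfy `v_i·v_{i+1} = -1` and `v_i·v_j = 0` for
`|i - j| ≥ 2`, and `v_i·w_0 = 0` (so `v_i ∈ L`) for `1 ≤ i ≤ m`. -/
theorem stmt_7 (p q n r : ℤ) (t s l : ℕ) (a : ℕ → ℤ) (m : ℕ → ℕ) (σ : Fin t → ℤ)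
    (h : IsCMLattice p q n r t s l a m σ) :
    (∀ i ≤ (Mset s l m).card, vSeq t s l m i ∈ LFset t s l m) ∧
    (∀ x ∈ LFset t s l m, ∃! c : Fin ((Mset s l m).card + 1) → ℤ,
      x = ∑ i : Fin ((Mset s l m).card + 1), c i • vSeq t s l m (i : ℕ)) ∧
    (∀ i, i + 1 ≤ (Mset s l m).card →
      dot (vSeq t s l m i) (vSeq t s l m (i + 1)) = -1) ∧
    (∀ i j, i ≤ (Mset s l m).card → j ≤ (Mset s l m).card → 2 ≤ |(i : ℤ) - (j : ℤ)| →
      dot (vSeq t s l m i) (vSeq t s l m j) = 0) ∧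
    (∀ i, 1 ≤ i → i ≤ (Mset s l m).card →
      dot (vSeq t s l m i) (w0 t s σ) = 0 ∧ vSeq t s l m i ∈ Lset t s l σ m) := by
  have hm0 := h.hm0
  have hs3 := h.hs
  have hstep : ∀ K, 1 ≤ K → K ≤ l → m (K - 1) < m K := by
    intro K h1 h2
    have hr := h.hmrec K h1 h2
    have ha := h.hak K h1 h2
    omega
  have hfar : ∀ i j, i + 2 ≤ j → j ≤ (Mset s l m).card →
      dot (vSeq t s l m i) (vSeq t s l m j) = 0 := by
    intro i j hij hjc
    have hj1c : j - 1 < (Mset s l m).card := by omega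
    rcases Nat.eq_zero_or_pos i with rfl | hpos
    · rw [show vSeq t s l m 0 = v0vec t s l m from if_pos rfl, vSeq_pos j (by omega)]
      rw [dot_v0_vK hm0 hstep hs3 (eF_mem hj1c), if_neg]
      have h0 := eF_zero (s := s) (l := l) (m := m) (by omega)
      have := eF_smono (s := s) (l := l) (m := m) (show 0 < j - 1 by omega) hj1c
      omega
    · rw [vSeq_pos i (by omega), vSeq_pos j (by omega)]
      have hic : i < (Mset s l m).card := by omega
      have hnx : nxt s l m (eF s l m (i-1)) = eF s l m i := by
        rw [show i = i - 1 + 1 by omega] at hic ⊢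
        exact eF_nxt hm0 hs3 hic
      have hlt : eF s l m i < eF s l m (j-1) := eF_smono (by omega) hj1c
      rw [dot_vK_vK hm0 hstep hs3 (eF_mem (by omega)) (eF_mem hj1c)
        (eF_smono (by omega) hj1c) (by omega), if_neg (by omega)]
  refine ⟨vSeq_mem_LF hm0 hstep hs3, ?_, ?_, ?_, ?_⟩
  · -- basis
    intro x hx
    refine ⟨fun i => ccoef s l m x (i:ℕ), exists_coef hm0 hstep hs3 hx, ?_⟩
    intro y hy
    have hsub : ∑ i : Fin ((Mset s l m).card + 1),
        (y i - ccoef s l m x (i:ℕ)) • vSeq t s l m (i:ℕ) = 0 := by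
      have h1 := exists_coef hm0 hstep hs3 hx
      rw [Finset.sum_congr rfl (fun i _ => sub_smul (y i) (ccoef s l m x (i:ℕ))
        (vSeq t s l m (i:ℕ))), Finset.sum_sub_distrib, ← hy, ← h1, sub_self]
    have hz := lin_indep hm0 hstep hs3 _ hsub
    funext i
    have hzi := congrFun hz i
    simpa [sub_eq_zero] using hzi
  · -- adjacent
    intro i hi1
    rcases Nat.eq_zero_or_pos i with rfl | hpos
    · rw [show vSeq t s l m 0 = v0vec t s l m from if_pos rfl, vSeq_pos 1 one_ne_zero,
        show (1:ℕ) - 1 = 0 from rfl]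
      rw [dot_v0_vK hm0 hstep hs3 (eF_mem (by omega)),
        if_pos (eF_zero (by omega)).symm]
    · rw [vSeq_pos i (by omega), vSeq_pos (i+1) (by omega), show i + 1 - 1 = i from rfl]
      have hic : i < (Mset s l m).card := by omega
      have hnx : nxt s l m (eF s l m (i-1)) = eF s l m i := by
        rw [show i = i - 1 + 1 by omega] at hic ⊢
        exact eF_nxt hm0 hs3 hic
      rw [dot_vK_vK hm0 hstep hs3 (eF_mem (by omega)) (eF_mem hic)
        (eF_smono (by omega) hic) (le_of_eq hnx), if_pos hnx]
  · -- far
    intro i j hi hj habs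
    have hcases : i + 2 ≤ j ∨ j + 2 ≤ i := by
      rcases abs_cases ((i:ℤ) - (j:ℤ)) with ⟨he, _⟩ | ⟨he, _⟩ <;> omega
    rcases hcases with hc | hc
    · exact hfar i j hc hj
    · rw [dot_comm]
      exact hfar j i hc hi
  · -- in L
    intro i h1i hic
    have hd0 : dot (vSeq t s l m i) (w0 t s σ) = 0 := by
      rw [vSeq_pos i (by omega)]
      exact dot_vK_w0 hm0 hstep hs3 (eF_mem (by omega)) σ
    refine ⟨hd0, ?_⟩
    intro K hK
    unfold wvec
    by_cases hK0 : K = 0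
    · rw [if_pos hK0]
      exact hd0
    · rw [if_neg hK0]
      exact (vSeq_mem_LF hm0 hstep hs3 i hic).2 K (by omega) hK
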